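/- Let Σ be a finite simplicial complex and let L be a valid interleaved removal sequence on Σ. Let V be the set of pairs removed by L. Then V is a discrete vector field (each simplex of Σ occurs in at most one pair of V) and V admits no closed V-path; hence V is a Forman gradient. (Proposition 2: the discrete vector field produced by any interleaved-based algorithm is a Forman gradient.) -/

import Mathlib

open Finset

variable {α : Type*}

/-- `σ` is an immediate face of `τ`. -/
def ImmFace (σ τ : Finset α) : Prop :=
  σ ⊆ τ ∧ σ.card + 1 = τ.card

/-- A simplicial complex: a family of nonempty finsets closed under nonempty subsets. -/
def IsComplex (S : Set (Finset α)) : Prop :=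
  (∀ σ ∈ S, σ.Nonempty) ∧ ∀ τ ∈ S, ∀ σ : Finset α, σ ⊆ τ → σ.Nonempty → σ ∈ S

/-- Immediate boundary of `τ` in the family `S`. -/
def bd (S : Set (Finset α)) (τ : Finset α) : Set (Finset α) :=
  {σ ∈ S | ImmFace σ τ}

/-- Immediate coboundary of `σ` in the family `S`. -/
def cbd (S : Set (Finset α)) (σ : Finset α) : Set (Finset α) :=
  {τ ∈ S | ImmFace σ τ}

/-- `(σ, τ)` is a coreduction pair in `S`. -/
def CoredPair (S : Set (Finset α)) (σ τ : Finset α) : Prop :=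
  σ ∈ S ∧ τ ∈ S ∧ ImmFace σ τ ∧ bd S τ = {σ}

/-- `(σ, τ)` is a reduction pair in `S`. -/
def RedPair (S : Set (Finset α)) (σ τ : Finset α) : Prop :=
  σ ∈ S ∧ τ ∈ S ∧ ImmFace σ τ ∧ cbd S σ = {τ}

/-- `σ` is a free simplex in `S`. -/
def FreeSimplex (S : Set (Finset α)) (σ : Finset α) : Prop :=
  σ ∈ S ∧ bd S σ = ∅

/-- `σ` is a top simplex in `S`. -/
def TopSimplex (S : Set (Finset α)) (σ : Finset α) : Prop :=
  σ ∈ S ∧ cbd S σ = ∅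

/-- `S'` is an upward-closed subfamily of `S`. -/
def UpClosedIn (S S' : Set (Finset α)) : Prop :=
  S' ⊆ S ∧ ∀ σ ∈ S', ∀ τ ∈ S, σ ⊆ τ → τ ∈ S'

/-- An operation: removal of a pair of simplices, or of a single simplex. -/
abbrev Op (α : Type*) := (Finset α × Finset α) ⊕ Finset α

/-- Excise the simplices of an operation from a family. -/
def removeOp (S : Set (Finset α)) : Op α → Set (Finset α)
  | Sum.inl (σ, τ) => S \ {σ, τ}
  | Sum.inr σ => S \ {σ}

/-- Remaining family after performing a list of operations in order. -/
def remaining (S : Set (Finset α)) (L : List (Op α)) : Set (Finset α) :=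
  L.foldl removeOp S

/-- A coreduction-based removal sequence: every pair is a coreduction pair and
every single simplex is free, in the current remaining family. -/
def IsCoredSeq (S : Set (Finset α)) : List (Op α) → Prop
  | [] => True
  | o :: L =>
      (match o with
        | Sum.inl (σ, τ) => CoredPair S σ τ
        | Sum.inr σ => FreeSimplex S σ) ∧ IsCoredSeq (removeOp S o) L

/-- A reduction-based removal sequence: every pair is a reduction pair and
every single simplex is top, in the current remaining family. -/
def IsRedSeq (S : Set (Finset α)) : List (Op α) → Prop
  | [] => True
  | o :: L =>
      (match o with
        | Sum.inl (σ, τ) => RedPair S σ τ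
        | Sum.inr σ => TopSimplex S σ) ∧ IsRedSeq (removeOp S o) L

/-- A valid interleaved removal sequence: every pair is a coreduction or
reduction pair, and every single simplex is free or top, in the current
remaining family. -/
def IsInterSeq (S : Set (Finset α)) : List (Op α) → Prop
  | [] => True
  | o :: L =>
      (match o with
        | Sum.inl (σ, τ) => CoredPair S σ τ ∨ RedPair S σ τ
        | Sum.inr σ => FreeSimplex S σ ∨ TopSimplex S σ) ∧ IsInterSeq (removeOp S o) L

/-- A discrete vector field on `S`: pairs (face, immediate coface) of simplices of `S`,
each simplex of `S` belonging to at most one pair. -/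
def IsDVF (S : Set (Finset α)) (V : Set (Finset α × Finset α)) : Prop :=
  (∀ p ∈ V, p.1 ∈ S ∧ p.2 ∈ S ∧ ImmFace p.1 p.2) ∧
  ∀ σ ∈ S, ∀ p ∈ V, ∀ q ∈ V,
    (σ = p.1 ∨ σ = p.2) → (σ = q.1 ∨ σ = q.2) → p = q

/-- A `V`-path: a nonempty sequence of pairs of `V` such that each `σ_{i+1}` is an
immediate face of `τ_i` different from `σ_i`. -/
def IsVPath (V : Set (Finset α × Finset α)) (P : List (Finset α × Finset α)) : Prop :=
  P ≠ [] ∧ (∀ p ∈ P, p ∈ V) ∧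
  P.Chain' (fun p q => ImmFace q.1 p.2 ∧ q.1 ≠ p.1)

/-- A closed `V`-path: `σ_1` is an immediate face of `τ_r` different from `σ_r`. -/
def IsClosedVPath (V : Set (Finset α × Finset α))
    (P : List (Finset α × Finset α)) : Prop :=
  ∃ hne : P ≠ [], IsVPath V P ∧
    ImmFace (P.head hne).1 (P.getLast hne).2 ∧
    (P.head hne).1 ≠ (P.getLast hne).1

/-- The lower star of a vertex `v` with respect to a vertex function `F`. -/
def lowerStar (S : Set (Finset α)) (F : α → ℝ) (v : α) : Set (Finset α) :=
  {σ ∈ S | v ∈ σ ∧ ∀ w ∈ σ, F v ≤ F w}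


/-! ### Auxiliary lemmas -/

theorem removeOp_subset (S : Set (Finset α)) (o : Op α) : removeOp S o ⊆ S := by
  rcases o with ⟨σ, τ⟩ | σ <;> exact Set.diff_subset

theorem remaining_subset' (S : Set (Finset α)) (L : List (Op α)) :
    remaining S L ⊆ S := by
  induction L generalizing S with
  | nil => exact fun x h => h
  | cons o l ih =>
    exact fun x hx => removeOp_subset S o (ih (removeOp S o) hx)

theorem remaining_append' (S : Set (Finset α)) (l1 l2 : List (Op α)) :
    remaining S (l1 ++ l2) = remaining (remaining S l1) l2 :=
  List.foldl_append

theorem remaining_take_mono (S : Set (Finset α)) (L : List (Op α)) {i j : ℕ}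
    (hij : i ≤ j) : remaining S (L.take j) ⊆ remaining S (L.take i) := by
  have h1 : L.take i ++ (L.take j).drop i = L.take j := by
    have := List.take_append_drop i (L.take j)
    rwa [List.take_take, min_eq_left hij] at this
  rw [← h1, remaining_append']
  exact remaining_subset' _ _

theorem isInterSeq_append {S : Set (Finset α)} {l1 l2 : List (Op α)}
    (h : IsInterSeq S (l1 ++ l2)) : IsInterSeq (remaining S l1) l2 := by
  induction l1 generalizing S with
  | nil => exact h
  | cons o l ih => exact ih h.2

theorem removeOp_inl (S : Set (Finset α)) (p : Finset α × Finset α) :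
    removeOp S (Sum.inl p) = S \ {p.1, p.2} := by
  cases p; rfl

theorem mem_at_step {S : Set (Finset α)} {L : List (Op α)} (hL : IsInterSeq S L)
    {i : ℕ} (hi : i < L.length) {p : Finset α × Finset α}
    (hp : L[i] = Sum.inl p) :
    CoredPair (remaining S (L.take i)) p.1 p.2 ∨
      RedPair (remaining S (L.take i)) p.1 p.2 := by
  have h1 : IsInterSeq (remaining S (L.take i)) (L.drop i) :=
    isInterSeq_append (by rw [List.take_append_drop]; exact hL)
  rw [← List.getElem_cons_drop hi, hp] at h1
  exact h1.1

theorem mem_remaining_at_step {S : Set (Finset α)} {L : List (Op α)}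
    (hL : IsInterSeq S L) {i : ℕ} (hi : i < L.length) {p : Finset α × Finset α}
    (hp : L[i] = Sum.inl p) :
    p.1 ∈ remaining S (L.take i) ∧ p.2 ∈ remaining S (L.take i) ∧
      ImmFace p.1 p.2 := by
  rcases mem_at_step hL hi hp with h | h
  · exact ⟨h.1, h.2.1, h.2.2.1⟩
  · exact ⟨h.1, h.2.1, h.2.2.1⟩

theorem remaining_take_succ {S : Set (Finset α)} {L : List (Op α)} {i : ℕ}
    (hi : i < L.length) {p : Finset α × Finset α} (hp : L[i] = Sum.inl p) :
    remaining S (L.take (i + 1)) = remaining S (L.take i) \ {p.1, p.2} := by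
  rw [List.take_succ, List.getElem?_eq_getElem hi, hp, remaining_append']
  show removeOp (remaining S (L.take i)) (Sum.inl p) = _
  rw [removeOp_inl]

theorem removal_unique {S : Set (Finset α)} {L : List (Op α)} (hL : IsInterSeq S L)
    {i j : ℕ} (hi : i < L.length) (hj : j < L.length)
    {p q : Finset α × Finset α} (hp : L[i] = Sum.inl p) (hq : L[j] = Sum.inl q)
    {x : Finset α} (hxp : x = p.1 ∨ x = p.2) (hxq : x = q.1 ∨ x = q.2) :
    i = j := by
  by_contra hne
  wlog hij : i < j generalizing i j p q
  · exact this hj hi hq hp hxq hxp (Ne.symm hne) (by omega)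
  have hxmem : x ∈ remaining S (L.take j) := by
    obtain ⟨h1, h2, -⟩ := mem_remaining_at_step hL hj hq
    rcases hxq with rfl | rfl
    exacts [h1, h2]
  have hsub : remaining S (L.take j) ⊆ remaining S (L.take (i + 1)) :=
    remaining_take_mono S L (by omega)
  have h2 := hsub hxmem
  rw [remaining_take_succ hi hp] at h2
  exact h2.2 (by rcases hxp with rfl | rfl <;> simp)

theorem removal_unique' {S : Set (Finset α)} {L : List (Op α)} (hL : IsInterSeq S L)
    {i j : ℕ} (hi : i < L.length) (hj : j < L.length)
    {p q : Finset α × Finset α} (hp : L[i] = Sum.inl p) (hq : L[j] = Sum.inl q)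
    {x : Finset α} (hxp : x = p.1 ∨ x = p.2) (hxq : x = q.1 ∨ x = q.2) :
    p = q := by
  have hij := removal_unique hL hi hj hp hq hxp hxq
  subst hij
  rw [hp] at hq
  exact Sum.inl.inj hq

/-- Proposition 2: the set of pairs removed by a valid interleaved removal sequence
is a discrete vector field with no closed `V`-path, hence a Forman gradient. -/
theorem interleaved_produces_forman_gradient {α : Type*} [DecidableEq α]
    (S : Set (Finset α)) (hS : IsComplex S) (hfin : S.Finite)
    (L : List (Op α)) (hL : IsInterSeq S L) :
    IsDVF S {p : Finset α × Finset α | Sum.inl p ∈ L} ∧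
    ∀ P : List (Finset α × Finset α),
      ¬ IsClosedVPath {p : Finset α × Finset α | Sum.inl p ∈ L} P := by
  classical
  set V : Set (Finset α × Finset α) := {p : Finset α × Finset α | Sum.inl p ∈ L}
    with hV
  constructor
  · constructor
    · intro p hp
      obtain ⟨i, hi, hgi⟩ := List.mem_iff_getElem.mp hp
      obtain ⟨h1, h2, h3⟩ := mem_remaining_at_step hL hi hgi
      exact ⟨remaining_subset' S _ h1, remaining_subset' S _ h2, h3⟩
    · intro σ hσ p hp q hq hσp hσq
      obtain ⟨i, hi, hgi⟩ := List.mem_iff_getElem.mp hp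
      obtain ⟨j, hj, hgj⟩ := List.mem_iff_getElem.mp hq
      exact removal_unique' hL hi hj hgi hgj (x := σ) hσp hσq
  · rintro P ⟨hne, ⟨-, hmemV, hchain⟩, hface, hneq⟩
    have hn : 0 < P.length := List.length_pos_iff.mpr hne
    -- choose removal indices
    have hidx : ∀ k : Fin P.length, ∃ i : ℕ, ∃ h : i < L.length,
        L[i] = Sum.inl (P.get k) := by
      intro k
      exact List.mem_iff_getElem.mp (hmemV _ (List.get_mem P k))
    choose f hf1 hf2 using hidx
    obtain ⟨m, -, hmin⟩ :=
      Finset.exists_min_image Finset.univ f ⟨⟨0, hn⟩, Finset.mem_univ _⟩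
    -- the edge relation along the path, cyclically
    have hedge : ∀ k k' : Fin P.length,
        (k.val + 1 = k'.val ∨ (k.val = P.length - 1 ∧ k'.val = 0)) →
        ImmFace (P.get k').1 (P.get k).2 ∧ (P.get k').1 ≠ (P.get k).1 := by
      intro k k' hkk'
      rcases hkk' with h | ⟨h1, h2⟩
      · have hlt : k.val < P.length - 1 := by
          have := k'.isLt; omega
        have hch := List.isChain_iff_getElem.mp hchain k.val (by omega)
        have ek' : k' = ⟨k.val + 1, by omega⟩ := Fin.ext h.symm
        rw [ek']
        exact hch
      · have e1 : P.head hne = P.get ⟨0, hn⟩ := by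
          simp [List.head_eq_getElem, List.get_eq_getElem]
        have e2 : P.getLast hne = P.get ⟨P.length - 1, by omega⟩ := by
          simp [List.getLast_eq_getElem, List.get_eq_getElem]
        have ek' : k' = ⟨0, hn⟩ := Fin.ext h2
        have ek : k = ⟨P.length - 1, by omega⟩ := Fin.ext h1
        rw [ek', ek, ← e1, ← e2]
        exact ⟨hface, hneq⟩
    rcases mem_at_step hL (hf1 m) (hf2 m) with hc | hr
    · -- coreduction pair: look at the successor of m
      obtain ⟨s, hes⟩ : ∃ s : Fin P.length,
          ImmFace (P.get s).1 (P.get m).2 ∧ (P.get s).1 ≠ (P.get m).1 := by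
        by_cases h' : m.val + 1 < P.length
        · exact ⟨⟨m.val + 1, h'⟩, hedge m _ (Or.inl rfl)⟩
        · exact ⟨⟨0, hn⟩, hedge m _ (Or.inr ⟨by omega, rfl⟩)⟩
      have hq1 : (P.get s).1 ∈ remaining S (L.take (f m)) :=
        remaining_take_mono S L (hmin s (Finset.mem_univ s))
          (mem_remaining_at_step hL (hf1 s) (hf2 s)).1
      have hbd : (P.get s).1 ∈ bd (remaining S (L.take (f m))) (P.get m).2 :=
        ⟨hq1, hes.1⟩
      rw [hc.2.2.2] at hbd
      exact hes.2 hbd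
    · -- reduction pair: look at the predecessor of m
      obtain ⟨r, her⟩ : ∃ r : Fin P.length,
          ImmFace (P.get m).1 (P.get r).2 ∧ (P.get m).1 ≠ (P.get r).1 := by
        by_cases h' : 0 < m.val
        · exact ⟨⟨m.val - 1, by omega⟩, hedge _ m (Or.inl (show m.val - 1 + 1 = m.val by omega))⟩
        · exact ⟨⟨P.length - 1, by omega⟩, hedge _ m (Or.inr ⟨rfl, by omega⟩)⟩
      have hq2 : (P.get r).2 ∈ remaining S (L.take (f m)) :=
        remaining_take_mono S L (hmin r (Finset.mem_univ r))
          (mem_remaining_at_step hL (hf1 r) (hf2 r)).2.1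
      have hcbd : (P.get r).2 ∈ cbd (remaining S (L.take (f m))) (P.get m).1 :=
        ⟨hq2, her.1⟩
      rw [hr.2.2.2] at hcbd
      have heq : P.get r = P.get m :=
        removal_unique' hL (hf1 r) (hf1 m) (hf2 r) (hf2 m)
          (x := (P.get m).2) (Or.inr hcbd.symm) (Or.inr rfl)
      exact her.2 (by rw [heq])
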